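/- arXiv:2208.12357 — 2 statements merged into one kernel-verified Lean document; each statement's English description precedes it below -/
import Mathlib

section
/- Let A be an invertible m×m real matrix, A_s a p×p real matrix, G a p×m real matrix, B a q×p real matrix, and suppose S₁ = A_s + G A⁻¹ Gᵀ and S₂ = B S₁⁻¹ Bᵀ are invertible. Define M₃ = [[A, 0, 0], [G, −S₁, 0], [0, B, S₂]]. If A⁻¹ Gᵀ S₁⁻¹ Bᵀ ≠ 0, then (M₃⁻¹K − I)² ≠ 0 while (M₃⁻¹K − I)³ = 0; that is, the minimal polynomial of M₃⁻¹K is (z − 1)³. -/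
open Matrix Polynomial

/-- Assemble a 3×3 block matrix from its nine blocks. -/
noncomputable def blk3 {m p q : Type*}
    (M11 : Matrix m m ℝ) (M12 : Matrix m p ℝ) (M13 : Matrix m q ℝ)
    (M21 : Matrix p m ℝ) (M22 : Matrix p p ℝ) (M23 : Matrix p q ℝ)
    (M31 : Matrix q m ℝ) (M32 : Matrix q p ℝ) (M33 : Matrix q q ℝ) :
    Matrix (m ⊕ (p ⊕ q)) (m ⊕ (p ⊕ q)) ℝ :=
  Matrix.fromBlocks M11 (Matrix.fromCols M12 M13)
    (Matrix.fromRows M21 M31) (Matrix.fromBlocks M22 M23 M32 M33)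

lemma blk3_mul {m p q : Type*} [Fintype m] [Fintype p] [Fintype q]
    (P11 : Matrix m m ℝ) (P12 : Matrix m p ℝ) (P13 : Matrix m q ℝ)
    (P21 : Matrix p m ℝ) (P22 : Matrix p p ℝ) (P23 : Matrix p q ℝ)
    (P31 : Matrix q m ℝ) (P32 : Matrix q p ℝ) (P33 : Matrix q q ℝ)
    (Q11 : Matrix m m ℝ) (Q12 : Matrix m p ℝ) (Q13 : Matrix m q ℝ)
    (Q21 : Matrix p m ℝ) (Q22 : Matrix p p ℝ) (Q23 : Matrix p q ℝ)
    (Q31 : Matrix q m ℝ) (Q32 : Matrix q p ℝ) (Q33 : Matrix q q ℝ) :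
    blk3 P11 P12 P13 P21 P22 P23 P31 P32 P33 * blk3 Q11 Q12 Q13 Q21 Q22 Q23 Q31 Q32 Q33 =
    blk3 (P11*Q11 + P12*Q21 + P13*Q31) (P11*Q12 + P12*Q22 + P13*Q32) (P11*Q13 + P12*Q23 + P13*Q33)
         (P21*Q11 + P22*Q21 + P23*Q31) (P21*Q12 + P22*Q22 + P23*Q32) (P21*Q13 + P22*Q23 + P23*Q33)
         (P31*Q11 + P32*Q21 + P33*Q31) (P31*Q12 + P32*Q22 + P33*Q32) (P31*Q13 + P32*Q23 + P33*Q33) := by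
  ext i j
  rcases i with i | i | i <;> rcases j with j | j | j <;>
    simp [blk3, Matrix.fromBlocks, Matrix.fromCols, Matrix.fromRows_apply_inl, Matrix.fromRows_apply_inr, Matrix.mul_apply,
      Fintype.sum_sum_type, Finset.sum_add_distrib, add_assoc]

lemma blk3_one {m p q : Type*} [DecidableEq m] [DecidableEq p] [DecidableEq q] :
    blk3 (m := m) (p := p) (q := q) 1 0 0 0 1 0 0 0 1 = 1 := by
  simp [blk3, Matrix.fromCols_zero, Matrix.fromRows_zero, Matrix.fromBlocks_one]

lemma blk3_zero {m p q : Type*} :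
    blk3 (m := m) (p := p) (q := q) 0 0 0 0 0 0 0 0 0 = 0 := by
  simp [blk3, Matrix.fromCols_zero, Matrix.fromRows_zero]

lemma blk3_sub {m p q : Type*}
    (P11 : Matrix m m ℝ) (P12 : Matrix m p ℝ) (P13 : Matrix m q ℝ)
    (P21 : Matrix p m ℝ) (P22 : Matrix p p ℝ) (P23 : Matrix p q ℝ)
    (P31 : Matrix q m ℝ) (P32 : Matrix q p ℝ) (P33 : Matrix q q ℝ)
    (Q11 : Matrix m m ℝ) (Q12 : Matrix m p ℝ) (Q13 : Matrix m q ℝ)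
    (Q21 : Matrix p m ℝ) (Q22 : Matrix p p ℝ) (Q23 : Matrix p q ℝ)
    (Q31 : Matrix q m ℝ) (Q32 : Matrix q p ℝ) (Q33 : Matrix q q ℝ) :
    blk3 P11 P12 P13 P21 P22 P23 P31 P32 P33 - blk3 Q11 Q12 Q13 Q21 Q22 Q23 Q31 Q32 Q33 =
    blk3 (P11-Q11) (P12-Q12) (P13-Q13) (P21-Q21) (P22-Q22) (P23-Q23) (P31-Q31) (P32-Q32) (P33-Q33) := by
  ext i j
  rcases i with i | i | i <;> rcases j with j | j | j <;>
    simp [blk3, Matrix.fromBlocks, Matrix.fromCols, Matrix.fromRows_apply_inl, Matrix.fromRows_apply_inr]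

lemma blk3_apply13 {m p q : Type*}
    (P11 : Matrix m m ℝ) (P12 : Matrix m p ℝ) (P13 : Matrix m q ℝ)
    (P21 : Matrix p m ℝ) (P22 : Matrix p p ℝ) (P23 : Matrix p q ℝ)
    (P31 : Matrix q m ℝ) (P32 : Matrix q p ℝ) (P33 : Matrix q q ℝ) (i : m) (j : q) :
    blk3 P11 P12 P13 P21 P22 P23 P31 P32 P33 (Sum.inl i) (Sum.inr (Sum.inr j)) = P13 i j := by
  simp [blk3, Matrix.fromBlocks, Matrix.fromCols]

/-- if `A⁻¹ Gᵀ S₁⁻¹ Bᵀ ≠ 0` then `(M₃⁻¹K − I)² ≠ 0` while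
`(M₃⁻¹K − I)³ = 0`; that is, the minimal polynomial of `M₃⁻¹K` is `(z − 1)³`. -/
theorem stmt3 (m p q : ℕ)
    (A : Matrix (Fin m) (Fin m) ℝ) (As : Matrix (Fin p) (Fin p) ℝ)
    (G : Matrix (Fin p) (Fin m) ℝ) (B : Matrix (Fin q) (Fin p) ℝ)
    (S1 : Matrix (Fin p) (Fin p) ℝ) (S2 : Matrix (Fin q) (Fin q) ℝ)
    (hS1def : S1 = As + G * A⁻¹ * Gᵀ) (hS2def : S2 = B * S1⁻¹ * Bᵀ)
    (hA : IsUnit A) (hS1 : IsUnit S1) (hS2 : IsUnit S2)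
    (K M3 : Matrix (Fin m ⊕ (Fin p ⊕ Fin q)) (Fin m ⊕ (Fin p ⊕ Fin q)) ℝ)
    (hK : K = blk3 A Gᵀ 0 G (-As) Bᵀ 0 B 0)
    (hM3 : M3 = blk3 A 0 0 G (-S1) 0 0 B S2)
    (hne : A⁻¹ * Gᵀ * S1⁻¹ * Bᵀ ≠ 0) :
    (M3⁻¹ * K - 1) ^ 2 ≠ 0 ∧ (M3⁻¹ * K - 1) ^ 3 = 0 ∧
    minpoly ℝ (M3⁻¹ * K) = (X - C 1) ^ 3 := by
  have hAd : IsUnit A.det := (Matrix.isUnit_iff_isUnit_det A).mp hA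
  have hS1d : IsUnit S1.det := (Matrix.isUnit_iff_isUnit_det S1).mp hS1
  have hS2d : IsUnit S2.det := (Matrix.isUnit_iff_isUnit_det S2).mp hS2
  have hAA : A * A⁻¹ = 1 := Matrix.mul_nonsing_inv A hAd
  have hS1S1 : S1 * S1⁻¹ = 1 := Matrix.mul_nonsing_inv S1 hS1d
  -- U = M3⁻¹ * K
  set X0 : Matrix (Fin m) (Fin p) ℝ := A⁻¹ * Gᵀ with hX0
  set Y0 : Matrix (Fin p) (Fin q) ℝ := -(S1⁻¹ * Bᵀ) with hY0
  have hMU : M3 * blk3 1 X0 0 0 1 Y0 0 0 1 = K := by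
    rw [hM3, hK, blk3_mul]
    simp only [Matrix.mul_one, Matrix.one_mul, Matrix.mul_zero, Matrix.zero_mul,
      add_zero, zero_add]
    have e1 : A * X0 = Gᵀ := by rw [hX0, ← Matrix.mul_assoc, hAA, Matrix.one_mul]
    have e2 : G * X0 + -S1 = -As := by
      rw [hX0, hS1def, ← Matrix.mul_assoc]; abel
    have e3 : -S1 * Y0 = Bᵀ := by
      rw [hY0, Matrix.neg_mul, Matrix.mul_neg, neg_neg, ← Matrix.mul_assoc, hS1S1,
        Matrix.one_mul]
    have e4 : B * Y0 + S2 = 0 := by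
      rw [hY0, hS2def, Matrix.mul_neg, ← Matrix.mul_assoc]; abel
    rw [e1, e2, e3, e4]
  have hM3det : IsUnit M3.det := by
    rw [hM3]
    unfold blk3
    rw [Matrix.fromCols_zero, Matrix.det_fromBlocks_zero₁₂, Matrix.det_fromBlocks_zero₁₂]
    exact hAd.mul (((Matrix.isUnit_iff_isUnit_det _).mp hS1.neg).mul hS2d)
  have hU : M3⁻¹ * K = blk3 1 X0 0 0 1 Y0 0 0 1 := by
    rw [← hMU, ← Matrix.mul_assoc, Matrix.nonsing_inv_mul M3 hM3det, Matrix.one_mul]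
  have hN : M3⁻¹ * K - 1 = blk3 0 X0 0 0 0 Y0 0 0 0 := by
    rw [hU, ← blk3_one, blk3_sub]
    simp
  have hN2 : (M3⁻¹ * K - 1) ^ 2 = blk3 0 0 (X0 * Y0) 0 0 0 0 0 0 := by
    rw [sq, hN, blk3_mul]
    simp
  have hN3 : (M3⁻¹ * K - 1) ^ 3 = 0 := by
    rw [pow_succ, hN2, hN, blk3_mul]
    simpa using blk3_zero
  have hXY : X0 * Y0 ≠ 0 := by
    intro h
    apply hne
    rw [Matrix.mul_assoc]
    simpa [hY0, Matrix.mul_neg, neg_eq_zero] using h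
  have hN2ne : (M3⁻¹ * K - 1) ^ 2 ≠ 0 := by
    rw [hN2]
    intro h
    apply hXY
    ext i j
    have := congrFun (congrFun h (Sum.inl i)) (Sum.inr (Sum.inr j))
    simpa [blk3_apply13] using this
  refine ⟨hN2ne, hN3, ?_⟩
  have hint : IsIntegral ℝ (M3⁻¹ * K) := Algebra.IsIntegral.isIntegral _
  have haev : (Polynomial.aeval (M3⁻¹ * K)) (((X - C 1) ^ 3 : Polynomial ℝ)) = 0 := by
    simpa [map_pow] using hN3
  have hdvd : minpoly ℝ (M3⁻¹ * K) ∣ (X - C 1) ^ 3 := minpoly.dvd ℝ _ haev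
  obtain ⟨i, hi3, hassoc⟩ := (dvd_prime_pow (prime_X_sub_C (1:ℝ)) 3).mp hdvd
  have heq : minpoly ℝ (M3⁻¹ * K) = (X - C 1) ^ i :=
    Polynomial.eq_of_monic_of_associated (minpoly.monic hint) ((monic_X_sub_C (1:ℝ)).pow i) hassoc
  have hi : i = 3 := by
    by_contra hne3
    have hi2 : i ≤ 2 := by omega
    apply hN2ne
    have h0 : (M3⁻¹ * K - 1) ^ i = 0 := by
      have := minpoly.aeval ℝ (M3⁻¹ * K)
      rw [heq] at this
      simpa [map_pow] using this
    calc (M3⁻¹ * K - 1) ^ 2 = (M3⁻¹ * K - 1) ^ i * (M3⁻¹ * K - 1) ^ (2 - i) := by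
          rw [← pow_add]; congr 1; omega
      _ = 0 := by rw [h0, zero_mul]
  rw [heq, hi]
end

section
/- Let A be an invertible m×m real matrix, A_s a p×p real matrix, G a p×m real matrix, B a q×p real matrix, and suppose S₁ = A_s + G A⁻¹ Gᵀ and S₂ = B S₁⁻¹ Bᵀ are invertible (so q ≤ p). Define the block lower-triangular preconditioner M̃₃ = [[A, 0, 0], [G, S₁, 0], [0, B, S₂]]. Then the characteristic polynomial of M̃₃⁻¹K is det(λI − M̃₃⁻¹K) = (λ − 1)^m · (λ + 1)^{p−q} · ((λ + 1)² − 2)^q; equivalently, the eigenvalues of M̃₃⁻¹K are 1 with algebraic multiplicity m, −1 with algebraic multiplicity p − q, and √2 − 1 and −√2 − 1 each with algebraic multiplicity q. -/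
open Matrix Polynomial

lemma my_fromCols_add {m n₁ n₂ R : Type*} [Add R] (A₁ : Matrix m n₁ R) (A₂ : Matrix m n₂ R)
    (B₁ : Matrix m n₁ R) (B₂ : Matrix m n₂ R) :
    fromCols A₁ A₂ + fromCols B₁ B₂ = fromCols (A₁ + B₁) (A₂ + B₂) := by
  ext i (j | j) <;> simp [fromCols_apply_inl, fromCols_apply_inr]

lemma my_fromRows_add {m₁ m₂ n R : Type*} [Add R] (A₁ : Matrix m₁ n R) (A₂ : Matrix m₂ n R)
    (B₁ : Matrix m₁ n R) (B₂ : Matrix m₂ n R) :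
    fromRows A₁ A₂ + fromRows B₁ B₂ = fromRows (A₁ + B₁) (A₂ + B₂) := by
  ext (i | i) j <;> simp [fromRows_apply_inl, fromRows_apply_inr]

lemma blk3_mul_s8 {m p q : Type*} [Fintype m] [Fintype p] [Fintype q]
    (M11 : Matrix m m ℝ) (M12 : Matrix m p ℝ) (M13 : Matrix m q ℝ)
    (M21 : Matrix p m ℝ) (M22 : Matrix p p ℝ) (M23 : Matrix p q ℝ)
    (M31 : Matrix q m ℝ) (M32 : Matrix q p ℝ) (M33 : Matrix q q ℝ)
    (N11 : Matrix m m ℝ) (N12 : Matrix m p ℝ) (N13 : Matrix m q ℝ)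
    (N21 : Matrix p m ℝ) (N22 : Matrix p p ℝ) (N23 : Matrix p q ℝ)
    (N31 : Matrix q m ℝ) (N32 : Matrix q p ℝ) (N33 : Matrix q q ℝ) :
    blk3 M11 M12 M13 M21 M22 M23 M31 M32 M33 * blk3 N11 N12 N13 N21 N22 N23 N31 N32 N33 =
    blk3 (M11*N11 + (M12*N21 + M13*N31)) (M11*N12 + (M12*N22 + M13*N32)) (M11*N13 + (M12*N23 + M13*N33))
         (M21*N11 + (M22*N21 + M23*N31)) (M21*N12 + (M22*N22 + M23*N32)) (M21*N13 + (M22*N23 + M23*N33))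
         (M31*N11 + (M32*N21 + M33*N31)) (M31*N12 + (M32*N22 + M33*N32)) (M31*N13 + (M32*N23 + M33*N33)) := by
  unfold blk3
  rw [Matrix.fromBlocks_multiply, Matrix.fromCols_mul_fromRows,
    Matrix.fromCols_mul_fromBlocks, Matrix.mul_fromCols, my_fromCols_add,
    Matrix.fromRows_mul, Matrix.fromBlocks_mul_fromRows, my_fromRows_add,
    Matrix.fromRows_mul_fromCols, Matrix.fromBlocks_multiply, Matrix.fromBlocks_add]

lemma my_map_neg {m n R S : Type*} [Ring R] [Ring S] (f : R →+* S) (M : Matrix m n R) :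
    (-M).map (f : R → S) = -(M.map (f : R → S)) := by
  ext i j; simp

lemma smul_one_map {n R S : Type*} [DecidableEq n] [Semiring R] [Semiring S]
    (f : R →+* S) (c : R) :
    ((c • (1 : Matrix n n R)).map f) = f c • (1 : Matrix n n S) := by
  ext i j
  by_cases h : i = j <;> simp [h, Matrix.one_apply, smul_eq_mul]

lemma charmatrix_neg_one {n : Type*} [DecidableEq n] [Fintype n] :
    charmatrix (-1 : Matrix n n ℝ) = (X + 1 : ℝ[X]) • (1 : Matrix n n ℝ[X]) := by
  ext i j
  by_cases h : i = j <;>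
    simp [h, charmatrix_apply_eq, charmatrix_apply_ne, Matrix.one_apply, smul_eq_mul]

lemma charpoly_one' {n : Type*} [DecidableEq n] [Fintype n] :
    (1 : Matrix n n ℝ).charpoly = ((X : ℝ[X]) - 1) ^ Fintype.card n := by
  have h : charmatrix (1 : Matrix n n ℝ) = ((X : ℝ[X]) - 1) • (1 : Matrix n n ℝ[X]) := by
    ext i j
    by_cases h : i = j <;>
      simp [h, charmatrix_apply_eq, charmatrix_apply_ne, Matrix.one_apply, smul_eq_mul]
  rw [Matrix.charpoly, h, Matrix.det_smul, Matrix.det_one, mul_one]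

/-- the characteristic polynomial of `M̃₃⁻¹ K` is
`(λ − 1)^m (λ + 1)^(p−q) ((λ + 1)² − 2)^q`. -/
theorem stmt8 (m p q : ℕ)
    (A : Matrix (Fin m) (Fin m) ℝ) (As : Matrix (Fin p) (Fin p) ℝ)
    (G : Matrix (Fin p) (Fin m) ℝ) (B : Matrix (Fin q) (Fin p) ℝ)
    (S1 : Matrix (Fin p) (Fin p) ℝ) (S2 : Matrix (Fin q) (Fin q) ℝ)
    (hS1def : S1 = As + G * A⁻¹ * Gᵀ) (hS2def : S2 = B * S1⁻¹ * Bᵀ)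
    (hA : IsUnit A) (hS1 : IsUnit S1) (hS2 : IsUnit S2)
    (K M3t : Matrix (Fin m ⊕ (Fin p ⊕ Fin q)) (Fin m ⊕ (Fin p ⊕ Fin q)) ℝ)
    (hK : K = blk3 A Gᵀ 0 G (-As) Bᵀ 0 B 0)
    (hM3t : M3t = blk3 A 0 0 G S1 0 0 B S2) :
    (M3t⁻¹ * K).charpoly =
      (X - 1) ^ m * (X + 1) ^ (p - q) * ((X + 1) ^ 2 - 2) ^ q := by
  have hAd : IsUnit A.det := (Matrix.isUnit_iff_isUnit_det A).mp hA
  have hS1d : IsUnit S1.det := (Matrix.isUnit_iff_isUnit_det S1).mp hS1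
  have hS2d : IsUnit S2.det := (Matrix.isUnit_iff_isUnit_det S2).mp hS2
  have hq : q ≤ p := by
    have h1 : S2.rank = q := by rw [Matrix.rank_of_isUnit S2 hS2, Fintype.card_fin]
    have h2 : S2.rank ≤ p := by
      rw [hS2def, Matrix.mul_assoc]
      exact (Matrix.rank_mul_le_left _ _).trans (by simpa using B.rank_le_card_width)
    omega
  have hS2inv : S2⁻¹ * (B * S1⁻¹ * Bᵀ) = 1 := by
    rw [← hS2def]; exact Matrix.nonsing_inv_mul _ hS2d
  set T : Matrix (Fin m ⊕ (Fin p ⊕ Fin q)) (Fin m ⊕ (Fin p ⊕ Fin q)) ℝ :=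
    blk3 1 (A⁻¹ * Gᵀ) 0 0 (-1) (S1⁻¹ * Bᵀ) 0 ((2:ℝ) • (S2⁻¹ * B)) (-1) with hT
  have hMT : M3t * T = K := by
    rw [hM3t, hT, blk3_mul_s8, hK]
    have e12 : A * (A⁻¹ * Gᵀ) = Gᵀ := by
      rw [← Matrix.mul_assoc, Matrix.mul_nonsing_inv A hAd, Matrix.one_mul]
    have e22 : G * (A⁻¹ * Gᵀ) + -S1 = -As := by
      rw [hS1def, ← Matrix.mul_assoc]; abel
    have e23 : S1 * (S1⁻¹ * Bᵀ) = Bᵀ := by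
      rw [← Matrix.mul_assoc, Matrix.mul_nonsing_inv S1 hS1d, Matrix.one_mul]
    have e32 : -B + (2:ℝ) • (S2 * (S2⁻¹ * B)) = B := by
      rw [← Matrix.mul_assoc, Matrix.mul_nonsing_inv S2 hS2d, Matrix.one_mul, two_smul]; abel
    have e33 : B * (S1⁻¹ * Bᵀ) + -S2 = 0 := by
      rw [hS2def, ← Matrix.mul_assoc]; abel
    simp
    rw [e12, e22, e23, e32, e33]
  have hinv : M3t⁻¹ * K = T := by
    have hdet : IsUnit M3t.det := by
      rw [hM3t]
      unfold blk3
      rw [Matrix.fromCols_zero, Matrix.det_fromBlocks_zero₁₂, Matrix.det_fromBlocks_zero₁₂]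
      exact hAd.mul (hS1d.mul hS2d)
    rw [← hMT, ← Matrix.mul_assoc, Matrix.nonsing_inv_mul _ hdet, Matrix.one_mul]
  rw [hinv, hT]
  unfold blk3
  rw [Matrix.fromRows_zero, Matrix.charpoly_fromBlocks_zero₂₁, charpoly_one', Fintype.card_fin]
  rw [mul_assoc]
  congr 1
  -- the 2x2 block charpoly
  rw [Matrix.charpoly, charmatrix_fromBlocks, charmatrix_neg_one, charmatrix_neg_one]
  set F := FractionRing ℝ[X]
  set f := algebraMap ℝ[X] F with hf
  apply IsFractionRing.injective ℝ[X] F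
  rw [RingHom.map_det, RingHom.mapMatrix_apply, Matrix.fromBlocks_map]
  set a : F := f (X + 1) with ha
  have ha0 : a ≠ 0 := by
    rw [ha]
    intro h
    have := (map_eq_zero_iff f (IsFractionRing.injective ℝ[X] F)).mp h
    exact (X_add_C_ne_zero (1:ℝ) : (X + C 1 : ℝ[X]) ≠ 0) (by simpa using this)
  have hmap1 : ((X + 1 : ℝ[X]) • (1 : Matrix (Fin p) (Fin p) ℝ[X])).map f
      = a • (1 : Matrix (Fin p) (Fin p) F) := smul_one_map f _
  have hmap2 : ((X + 1 : ℝ[X]) • (1 : Matrix (Fin q) (Fin q) ℝ[X])).map f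
      = a • (1 : Matrix (Fin q) (Fin q) F) := smul_one_map f _
  rw [hmap1, hmap2]
  -- invertibility of a • 1
  have hmulinv : (a • (1 : Matrix (Fin p) (Fin p) F)) * (a⁻¹ • 1) = 1 := by
    rw [Matrix.smul_mul, Matrix.mul_smul, Matrix.mul_one, smul_smul, mul_inv_cancel₀ ha0, one_smul]
  haveI : Invertible (a • (1 : Matrix (Fin p) (Fin p) F)) :=
    ⟨a⁻¹ • 1, by rw [Matrix.smul_mul, Matrix.mul_smul, Matrix.mul_one, smul_smul,
      inv_mul_cancel₀ ha0, one_smul], hmulinv⟩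
  rw [Matrix.det_fromBlocks₁₁]
  have hinvOf : ⅟(a • (1 : Matrix (Fin p) (Fin p) F)) = a⁻¹ • 1 := invOf_eq_right_inv hmulinv
  rw [hinvOf]
  -- compute the product of the off-diagonal mapped blocks
  have hprod : ((-(((2:ℝ) • (S2⁻¹ * B)).map (C : ℝ →+* ℝ[X]))).map f) *
      (a⁻¹ • (1 : Matrix (Fin p) (Fin p) F)) *
      ((-((S1⁻¹ * Bᵀ).map (C : ℝ →+* ℝ[X]))).map f)
      = (a⁻¹ * 2) • (1 : Matrix (Fin q) (Fin q) F) := by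
    have h1 : ((2:ℝ) • (S2⁻¹ * B)) * (S1⁻¹ * Bᵀ) = (2:ℝ) • (1 : Matrix (Fin q) (Fin q) ℝ) := by
      rw [Matrix.smul_mul]
      congr 1
      rw [Matrix.mul_assoc, ← Matrix.mul_assoc B]
      exact hS2inv
    calc ((-(((2:ℝ) • (S2⁻¹ * B)).map (C : ℝ →+* ℝ[X]))).map f) *
          (a⁻¹ • (1 : Matrix (Fin p) (Fin p) F)) *
          ((-((S1⁻¹ * Bᵀ).map (C : ℝ →+* ℝ[X]))).map f)
        = a⁻¹ • ((((2:ℝ) • (S2⁻¹ * B)).map (C : ℝ →+* ℝ[X])).map f *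
            (((S1⁻¹ * Bᵀ).map (C : ℝ →+* ℝ[X])).map f)) := by
          rw [Matrix.mul_smul, Matrix.mul_one, Matrix.smul_mul, my_map_neg, my_map_neg,
            Matrix.neg_mul, Matrix.mul_neg, neg_neg]
      _ = a⁻¹ • (((((2:ℝ) • (S2⁻¹ * B)) * (S1⁻¹ * Bᵀ)).map (C : ℝ →+* ℝ[X])).map f) := by
          rw [← Matrix.map_mul, ← Matrix.map_mul]
      _ = (a⁻¹ * 2) • (1 : Matrix (Fin q) (Fin q) F) := by
          rw [h1, Matrix.map_map]
          rw [show ((f : ℝ[X] → F) ∘ (C : ℝ → ℝ[X])) = ((f.comp (C : ℝ →+* ℝ[X])) : ℝ → F) from rfl]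
          rw [smul_one_map, map_ofNat, smul_smul]
  rw [hprod]
  have hsub : (a • (1 : Matrix (Fin q) (Fin q) F)) - (a⁻¹ * 2) • (1 : Matrix (Fin q) (Fin q) F)
      = (a - a⁻¹ * 2) • (1 : Matrix (Fin q) (Fin q) F) := by
    rw [← sub_smul]
  rw [hsub, Matrix.det_smul, Matrix.det_smul, Matrix.det_one, Matrix.det_one,
    Fintype.card_fin, Fintype.card_fin, mul_one, mul_one]
  -- RHS
  have hR : f ((X + 1 : ℝ[X]) ^ (p - q) * ((X + 1 : ℝ[X]) ^ 2 - 2) ^ q)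
      = a ^ (p - q) * (a ^ 2 - 2) ^ q := by
    rw [_root_.map_mul, map_pow, map_pow, map_sub, map_pow, map_ofNat, ← ha]
  rw [hR]
  have key : a - a⁻¹ * 2 = (a ^ 2 - 2) * a⁻¹ := by
    rw [sub_mul, pow_two, mul_assoc, mul_inv_cancel₀ ha0, mul_one]
    ring
  rw [key, mul_pow, pow_sub₀ a ha0 hq, inv_pow]
  ring
end
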